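/- arXiv:2102.10277 — 2 statements merged into one kernel-verified Lean document; each statement's English description precedes it below -/
import Mathlib

section
/- Let n, a, b, t be positive integers and let F be an a-uniform family and G a b-uniform family of subsets of [n] such that F and G are cross-t-intersecting. Then there exist an a-uniform family F* with |F*| = |F| and a b-uniform family G* with |G*| = |G| such that F* × G* is contained in the union, over all u, v, s ∈ [n] with u + v = s + t, of the Cartesian products {F ∈ C([n],a) : |F ∩ [s]| ≥ u} × {G ∈ C([n],b) : |G ∩ [s]| ≥ v}. -/
open Finset

/-- The ground set `[n] = {1,…,n}`. -/
def gs (n : ℕ) : Finset ℕ := Finset.Icc 1 n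

/-- `F` is an `m`-uniform family of subsets of `[n]`. -/
def UniformOn (n m : ℕ) (F : Finset (Finset ℕ)) : Prop :=
  ∀ A ∈ F, A ⊆ gs n ∧ A.card = m

/-- `F` and `G` are cross-`t`-intersecting. -/
def CrossInt (t : ℕ) (F G : Finset (Finset ℕ)) : Prop :=
  ∀ A ∈ F, ∀ B ∈ G, t ≤ (A ∩ B).card

section Helpers

lemma mem_gs {n x : ℕ} : x ∈ gs n ↔ 1 ≤ x ∧ x ≤ n := by simp [gs, Finset.mem_Icc]

lemma card_gs (n : ℕ) : (gs n).card = n := by simp [gs]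

lemma gs_succ (s : ℕ) : gs (s + 1) = insert (s + 1) (gs s) := by
  rw [gs, gs, ← Finset.insert_Icc_right_eq_Icc_add_one (by omega)]

lemma compress_eq_of (i j : ℕ) (h : i ≠ j) (B : Finset ℕ) (hj : j ∈ B) (hi : i ∉ B) :
    UV.compress {i} {j} B = insert i (B.erase j) := by
  rw [UV.compress, if_pos ⟨Finset.disjoint_singleton_left.2 hi, Finset.singleton_subset_iff.2 hj⟩]
  rw [Finset.sup_eq_union, Finset.union_comm, ← Finset.insert_eq, ← Finset.erase_eq,
    Finset.erase_insert_of_ne h]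

lemma compress_eq_self (i j : ℕ) (B : Finset ℕ) (h : ¬(j ∈ B ∧ i ∉ B)) :
    UV.compress {i} {j} B = B := by
  rw [UV.compress, if_neg]
  rintro ⟨h1, h2⟩
  exact h ⟨Finset.singleton_subset_iff.1 h2, Finset.disjoint_singleton_left.1 h1⟩

lemma inter_shiftR (A B : Finset ℕ) (i j : ℕ) (hiA : i ∉ A) :
    A ∩ insert i (B.erase j) = (A ∩ B).erase j := by
  ext x
  simp only [Finset.mem_inter, Finset.mem_insert, Finset.mem_erase]
  constructor
  · rintro ⟨hxA, rfl | ⟨hxj, hxB⟩⟩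
    · exact absurd hxA hiA
    · exact ⟨hxj, hxA, hxB⟩
  · rintro ⟨hxj, hxA, hxB⟩
    exact ⟨hxA, Or.inr ⟨hxj, hxB⟩⟩

lemma shiftL_inter (A B : Finset ℕ) (i j : ℕ) (hiB : i ∉ B) :
    insert i (A.erase j) ∩ B = (A ∩ B).erase j := by
  rw [Finset.inter_comm, inter_shiftR B A i j hiB, Finset.inter_comm]

lemma inter_shiftR_mem (A B : Finset ℕ) (i j : ℕ) (hiA : i ∈ A) :
    A ∩ insert i (B.erase j) = insert i ((A ∩ B).erase j) := by
  ext x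
  simp only [Finset.mem_inter, Finset.mem_insert, Finset.mem_erase]
  constructor
  · rintro ⟨hxA, rfl | ⟨hxj, hxB⟩⟩
    · exact Or.inl rfl
    · exact Or.inr ⟨hxj, hxA, hxB⟩
  · rintro (rfl | ⟨hxj, hxA, hxB⟩)
    · exact ⟨hiA, Or.inl rfl⟩
    · exact ⟨hxA, Or.inr ⟨hxj, hxB⟩⟩

lemma shift_inter_shift (A B : Finset ℕ) (i j : ℕ) :
    insert i (A.erase j) ∩ insert i (B.erase j) = insert i ((A ∩ B).erase j) := by
  ext x
  simp only [Finset.mem_inter, Finset.mem_insert, Finset.mem_erase]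
  tauto

lemma card_insert_erase_ge {A B : Finset ℕ} {i j t : ℕ} (hj : j ∈ A ∩ B) (hi : i ∉ (A ∩ B).erase j)
    (ht : t ≤ (A ∩ B).card) : t ≤ (insert i ((A ∩ B).erase j)).card := by
  rw [Finset.card_insert_of_notMem hi, Finset.card_erase_of_mem hj]
  have := Finset.card_pos.2 ⟨j, hj⟩
  omega

end Helpers

section Chunk2

lemma card_inter_gs_succ (A : Finset ℕ) (s : ℕ) :
    (A ∩ gs (s + 1)).card = (A ∩ gs s).card + (if s + 1 ∈ A then 1 else 0) := by
  rw [gs_succ, Finset.inter_comm]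
  by_cases h : s + 1 ∈ A
  · rw [if_pos h, Finset.insert_inter_of_mem h, Finset.inter_comm,
      Finset.card_insert_of_notMem]
    intro hx
    have := mem_gs.1 (Finset.mem_inter.1 hx).2
    omega
  · rw [if_neg h, add_zero, Finset.insert_inter_of_notMem h, Finset.inter_comm]

lemma weight_compress {i j : ℕ} (hij : i < j) (a : Finset ℕ) (h : j ∈ a ∧ i ∉ a) :
    (∑ x ∈ UV.compress {i} {j} a, x) < ∑ x ∈ a, x := by
  rw [compress_eq_of i j (by omega) a h.1 h.2,
    Finset.sum_insert (fun hx => h.2 (Finset.mem_of_mem_erase hx))]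
  have h2 : (∑ x ∈ a.erase j, x) + j = ∑ x ∈ a, x := Finset.sum_erase_add a (fun x => x) h.1
  omega

def famW (F : Finset (Finset ℕ)) : ℕ := ∑ A ∈ F, ∑ x ∈ A, x

lemma famW_compression (i j : ℕ) (hij : i < j) (F : Finset (Finset ℕ)) :
    famW (UV.compression {i} {j} F) ≤ famW F ∧
      (¬ UV.IsCompressed {i} {j} F → famW (UV.compression {i} {j} F) < famW F) := by
  classical
  have hQ : ∀ a ∈ F.filter (fun a => UV.compress {i} {j} a ∉ F),
      (∑ x ∈ UV.compress {i} {j} a, x) < ∑ x ∈ a, x := by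
    intro a ha
    rw [Finset.mem_filter] at ha
    by_cases hcond : j ∈ a ∧ i ∉ a
    · exact weight_compress hij a hcond
    · rw [compress_eq_self i j a hcond] at ha
      exact absurd ha.1 ha.2
  have hsum : famW (UV.compression {i} {j} F) =
      (∑ A ∈ F.filter (fun a => UV.compress {i} {j} a ∈ F), ∑ x ∈ A, x) +
      ∑ A ∈ F.filter (fun a => UV.compress {i} {j} a ∉ F), ∑ x ∈ UV.compress {i} {j} A, x := by
    rw [famW, UV.compression, Finset.sum_union UV.compress_disjoint, Finset.filter_image,
      Finset.sum_image (fun x hx y hy hxy =>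
        UV.compress_injOn (Finset.mem_coe.2 hx) (Finset.mem_coe.2 hy) hxy)]
  have hsplit : famW F =
      (∑ A ∈ F.filter (fun a => UV.compress {i} {j} a ∈ F), ∑ x ∈ A, x) +
      ∑ A ∈ F.filter (fun a => UV.compress {i} {j} a ∉ F), ∑ x ∈ A, x := by
    rw [famW, Finset.sum_filter_add_sum_filter_not]
  constructor
  · rw [hsum, hsplit]
    exact add_le_add_right (Finset.sum_le_sum (fun a ha => (hQ a ha).le)) _
  · intro hnc
    have hQne : (F.filter (fun a => UV.compress {i} {j} a ∉ F)).Nonempty := by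
      rw [Finset.filter_nonempty_iff]
      by_contra hno
      push_neg at hno
      apply hnc
      apply Finset.Subset.antisymm
      · intro x hx
        rcases UV.mem_compression.1 hx with ⟨hx1, _⟩ | ⟨hx1, b, hb, rfl⟩
        · exact hx1
        · exact hno b hb
      · intro x hx
        exact UV.mem_compression.2 (Or.inl ⟨hx, hno x hx⟩)
    rw [hsum, hsplit]
    exact add_lt_add_right (Finset.sum_lt_sum_of_nonempty hQne hQ) _

lemma uniformOn_compression {n m i j : ℕ} (hi : i ∈ gs n) (hij : i ≠ j)
    {F : Finset (Finset ℕ)} (hF : UniformOn n m F) :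
    UniformOn n m (UV.compression {i} {j} F) := by
  intro A hA
  rcases UV.mem_compression.1 hA with ⟨hA1, _⟩ | ⟨_, B, hB, rfl⟩
  · exact hF A hA1
  · obtain ⟨hBsub, hBcard⟩ := hF B hB
    by_cases hc : j ∈ B ∧ i ∉ B
    · rw [compress_eq_of i j hij B hc.1 hc.2]
      constructor
      · intro x hx
        rcases Finset.mem_insert.1 hx with rfl | hx
        · exact hi
        · exact hBsub (Finset.mem_of_mem_erase hx)
      · rw [Finset.card_insert_of_notMem (fun hx => hc.2 (Finset.mem_of_mem_erase hx)),
          Finset.card_erase_of_mem hc.1]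
        have : 1 ≤ B.card := Finset.card_pos.2 ⟨j, hc.1⟩
        omega
    · rw [compress_eq_self i j B hc]
      exact ⟨hBsub, hBcard⟩

end Chunk2

section Chunk3

lemma crossInt_mixed {t i j : ℕ} (hij : i ≠ j) {A B : Finset ℕ} (hjB : j ∈ B) (hiB : i ∉ B)
    (hAB : t ≤ (A ∩ B).card)
    (hshift : j ∈ A → i ∉ A → t ≤ ((insert i (A.erase j)) ∩ B).card) :
    t ≤ (A ∩ insert i (B.erase j)).card := by
  by_cases hjA : j ∈ A
  · by_cases hiA : i ∈ A
    · rw [inter_shiftR_mem A B i j hiA]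
      exact card_insert_erase_ge (Finset.mem_inter.2 ⟨hjA, hjB⟩)
        (fun hx => hiB (Finset.mem_inter.1 (Finset.mem_of_mem_erase hx)).2) hAB
    · have h2 := hshift hjA hiA
      rw [shiftL_inter A B i j hiB] at h2
      rw [inter_shiftR A B i j hiA]
      exact h2
  · refine hAB.trans (Finset.card_le_card ?_)
    intro x hx
    rw [Finset.mem_inter] at hx ⊢
    refine ⟨hx.1, Finset.mem_insert.2 (Or.inr (Finset.mem_erase.2
      ⟨fun hxj => hjA (hxj ▸ hx.1), hx.2⟩))⟩

lemma crossInt_compression {t i j : ℕ} (hij : i ≠ j) {F G : Finset (Finset ℕ)}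
    (h : CrossInt t F G) :
    CrossInt t (UV.compression {i} {j} F) (UV.compression {i} {j} G) := by
  intro A' hA' B' hB'
  rcases UV.mem_compression.1 hA' with ⟨hA'F, hcA'F⟩ | ⟨hA'nF, A, hAF, rfl⟩
  · rcases UV.mem_compression.1 hB' with ⟨hB'G, _⟩ | ⟨hB'nG, B, hBG, rfl⟩
    · exact h A' hA'F B' hB'G
    · -- B' = compress B, new
      have hcond : j ∈ B ∧ i ∉ B := by
        by_contra hc
        rw [compress_eq_self i j B hc] at hB'nG
        exact hB'nG hBG
      rw [compress_eq_of i j hij B hcond.1 hcond.2]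
      refine crossInt_mixed hij hcond.1 hcond.2 (h A' hA'F B hBG) (fun hjA hiA => ?_)
      have h3 := h _ hcA'F B hBG
      rwa [compress_eq_of i j hij A' hjA hiA] at h3
  · rcases UV.mem_compression.1 hB' with ⟨hB'G, hcB'G⟩ | ⟨hB'nG, B, hBG, rfl⟩
    · -- A' = compress A new, B' old
      have hcond : j ∈ A ∧ i ∉ A := by
        by_contra hc
        rw [compress_eq_self i j A hc] at hA'nF
        exact hA'nF hAF
      rw [compress_eq_of i j hij A hcond.1 hcond.2, Finset.inter_comm]
      refine crossInt_mixed hij hcond.1 hcond.2 ?_ (fun hjB hiB => ?_)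
      · rw [Finset.inter_comm]; exact h A hAF B' hB'G
      · have h3 := h A hAF _ hcB'G
        rw [compress_eq_of i j hij B' hjB hiB] at h3
        rwa [Finset.inter_comm]
    · -- both new
      have hcondA : j ∈ A ∧ i ∉ A := by
        by_contra hc
        rw [compress_eq_self i j A hc] at hA'nF
        exact hA'nF hAF
      have hcondB : j ∈ B ∧ i ∉ B := by
        by_contra hc
        rw [compress_eq_self i j B hc] at hB'nG
        exact hB'nG hBG
      rw [compress_eq_of i j hij A hcondA.1 hcondA.2, compress_eq_of i j hij B hcondB.1 hcondB.2,
        shift_inter_shift]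
      exact card_insert_erase_ge (Finset.mem_inter.2 ⟨hcondA.1, hcondB.1⟩)
        (fun hx => hcondA.2 (Finset.mem_inter.1 (Finset.mem_of_mem_erase hx)).1)
        (h A hAF B hBG)

end Chunk3

section Chunk4

lemma exists_compressed_pair (n a b t : ℕ) :
    ∀ N (F G : Finset (Finset ℕ)), famW F + famW G ≤ N →
      UniformOn n a F → UniformOn n b G → CrossInt t F G →
      ∃ F' G', UniformOn n a F' ∧ F'.card = F.card ∧ UniformOn n b G' ∧ G'.card = G.card ∧
        CrossInt t F' G' ∧
        ∀ i j, i ∈ gs n → j ∈ gs n → i < j →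
          UV.IsCompressed {i} {j} F' ∧ UV.IsCompressed {i} {j} G' := by
  intro N
  induction N using Nat.strong_induction_on with
  | _ N IH =>
    intro F G hN hF hG hFG
    by_cases hc : ∀ i j, i ∈ gs n → j ∈ gs n → i < j →
        UV.IsCompressed {i} {j} F ∧ UV.IsCompressed {i} {j} G
    · exact ⟨F, G, hF, rfl, hG, rfl, hFG, hc⟩
    · push_neg at hc
      obtain ⟨i, j, hi, hj, hij, hnc⟩ := hc
      have hFle := (famW_compression i j hij F).1
      have hGle := (famW_compression i j hij G).1
      have hlt : famW (UV.compression {i} {j} F) + famW (UV.compression {i} {j} G) < N := by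
        by_cases hP : UV.IsCompressed {i} {j} F
        · have := (famW_compression i j hij G).2 (hnc hP)
          omega
        · have := (famW_compression i j hij F).2 hP
          omega
      obtain ⟨F', G', h1, h2, h3, h4, h5, h6⟩ :=
        IH _ hlt (UV.compression {i} {j} F) (UV.compression {i} {j} G) le_rfl
          (uniformOn_compression hi hij.ne hF) (uniformOn_compression hi hij.ne hG)
          (crossInt_compression hij.ne hFG)
      exact ⟨F', G', h1, by rw [h2, UV.card_compression], h3, by rw [h4, UV.card_compression],
        h5, h6⟩

end Chunk4

section Chunk5

lemma exchange (n t : ℕ) (ht : 0 < t) (G : Finset (Finset ℕ))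
    (hGn : ∀ B ∈ G, B ⊆ gs n)
    (hGs : ∀ i j, 1 ≤ i → j ≤ n → i < j → ∀ B ∈ G, j ∈ B → i ∉ B →
      insert i (B.erase j) ∈ G)
    (A : Finset ℕ) :
    ∀ m, ∀ B ∈ G, (A ∩ B).card ≤ m →
      (∀ s, (A ∩ gs s).card + (B ∩ gs s).card < s + t) →
      ∃ B' ∈ G, (A ∩ B').card < t := by
  intro m
  induction m with
  | zero =>
    intro B hB hc _
    exact ⟨B, hB, by omega⟩
  | succ m IH =>
    intro B hBG hcard H
    by_cases hlt : (A ∩ B).card < t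
    · exact ⟨B, hBG, hlt⟩
    push_neg at hlt
    have hDne : (A ∩ B).Nonempty := Finset.card_pos.1 (by omega)
    set D := A ∩ B with hD
    set d := D.max' hDne with hd
    have hdD : d ∈ D := D.max'_mem hDne
    have hdA : d ∈ A := (Finset.mem_inter.1 hdD).1
    have hdB : d ∈ B := (Finset.mem_inter.1 hdD).2
    obtain ⟨hd1, hd2⟩ := mem_gs.1 (hGn B hBG hdB)
    have hDsub : D ⊆ gs d := by
      intro x hx
      exact mem_gs.2 ⟨(mem_gs.1 (hGn B hBG (Finset.mem_inter.1 hx).2)).1, D.le_max' x hx⟩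
    -- a free slot exists below d
    have hkey : ¬ (gs d ⊆ A ∪ B) := by
      intro hsub
      have h1 : (A ∩ gs d) ∪ (B ∩ gs d) = gs d := by
        rw [← Finset.union_inter_distrib_right]
        exact Finset.inter_eq_right.2 hsub
      have h2 : (A ∩ gs d) ∩ (B ∩ gs d) = D := by
        ext x
        simp only [Finset.mem_inter]
        constructor
        · rintro ⟨⟨ha1, _⟩, ⟨hb1, _⟩⟩
          rw [hD]
          exact Finset.mem_inter.2 ⟨ha1, hb1⟩
        · intro hx
          have hxd := hDsub hx
          rw [hD, Finset.mem_inter] at hx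
          exact ⟨⟨hx.1, hxd⟩, ⟨hx.2, hxd⟩⟩
      have h3 := Finset.card_union_add_card_inter (A ∩ gs d) (B ∩ gs d)
      rw [h1, h2, card_gs] at h3
      have h4 := H d
      omega
    obtain ⟨y0, hy0gs, hy0AB⟩ := Finset.not_subset.1 hkey
    have hSne : ((gs d).filter (fun x => x ∉ A ∪ B)).Nonempty :=
      ⟨y0, Finset.mem_filter.2 ⟨hy0gs, hy0AB⟩⟩
    set y := ((gs d).filter (fun x => x ∉ A ∪ B)).max' hSne with hy
    have hyS := Finset.mem_filter.1 (((gs d).filter (fun x => x ∉ A ∪ B)).max'_mem hSne)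
    have hyA : y ∉ A := fun h => hyS.2 (Finset.mem_union.2 (Or.inl h))
    have hyB : y ∉ B := fun h => hyS.2 (Finset.mem_union.2 (Or.inr h))
    obtain ⟨hy1, hyd⟩ := mem_gs.1 hyS.1
    have hyd' : y < d := lt_of_le_of_ne hyd (fun h => hyA (h ▸ hdA))
    have hfill : ∀ r, y < r → r ≤ d → r ∈ A ∪ B := by
      intro r hyr hrd
      by_contra hr
      have := ((gs d).filter (fun x => x ∉ A ∪ B)).le_max' r
        (Finset.mem_filter.2 ⟨mem_gs.2 ⟨by omega, hrd⟩, hr⟩)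
      omega
    have hB'G : insert y (B.erase d) ∈ G := hGs y d hy1 hd2 hyd' B hBG hdB hyB
    have hAB' : A ∩ insert y (B.erase d) = D.erase d := inter_shiftR A B y d hyA
    have hcard' : (A ∩ insert y (B.erase d)).card ≤ m := by
      rw [hAB', Finset.card_erase_of_mem hdD]
      omega
    -- chain
    have hstep : ∀ s, y ≤ s → s + 1 ≤ d →
        (A ∩ gs s).card + (B ∩ gs s).card + 1 ≤
          (A ∩ gs (s + 1)).card + (B ∩ gs (s + 1)).card := by
      intro s hys hsd
      have hr := hfill (s + 1) (by omega) hsd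
      rw [card_inter_gs_succ, card_inter_gs_succ]
      rcases Finset.mem_union.1 hr with hx | hx
      · simp only [if_pos hx]
        split_ifs <;> omega
      · simp only [if_pos hx]
        split_ifs <;> omega
    have hchain : ∀ k s, y ≤ s → s + k ≤ d →
        (A ∩ gs s).card + (B ∩ gs s).card + k ≤
          (A ∩ gs (s + k)).card + (B ∩ gs (s + k)).card := by
      intro k
      induction k with
      | zero => intro s _ _; simp
      | succ k IHk =>
        intro s hys hsd
        have h1 := IHk s hys (by omega)
        have h2 := hstep (s + k) (by omega) (by omega)
        have e : s + (k + 1) = s + k + 1 := rfl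
        rw [e]
        omega
    have hmid : ∀ s, y ≤ s → s < d → (A ∩ gs s).card + (B ∩ gs s).card + 2 ≤ s + t := by
      intro s hys hsd
      have h1 := hchain (d - 1 - s) s hys (by omega)
      have e1 : s + (d - 1 - s) = d - 1 := by omega
      rw [e1] at h1
      have e2 : d - 1 + 1 = d := by omega
      have h3 := card_inter_gs_succ A (d - 1)
      have h4 := card_inter_gs_succ B (d - 1)
      rw [e2, if_pos hdA] at h3
      rw [e2, if_pos hdB] at h4
      have h5 := H d
      omega
    have H' : ∀ s, (A ∩ gs s).card + ((insert y (B.erase d)) ∩ gs s).card < s + t := by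
      intro s
      rcases lt_or_ge s y with hsy | hys
      · have he : (insert y (B.erase d)) ∩ gs s = B ∩ gs s := by
          ext x
          simp only [Finset.mem_inter, Finset.mem_insert, Finset.mem_erase]
          constructor
          · rintro ⟨rfl | ⟨hxd, hxB⟩, hxs⟩
            · exact absurd (mem_gs.1 hxs).2 (by omega)
            · exact ⟨hxB, hxs⟩
          · rintro ⟨hxB, hxs⟩
            have hx2 := (mem_gs.1 hxs).2
            exact ⟨Or.inr ⟨by omega, hxB⟩, hxs⟩
        rw [he]
        exact H s
      · rcases lt_or_ge s d with hsd | hds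
        · have he : (insert y (B.erase d)) ∩ gs s = insert y (B ∩ gs s) := by
            ext x
            simp only [Finset.mem_inter, Finset.mem_insert, Finset.mem_erase]
            constructor
            · rintro ⟨rfl | ⟨hxd, hxB⟩, hxs⟩
              · exact Or.inl rfl
              · exact Or.inr ⟨hxB, hxs⟩
            · rintro (rfl | ⟨hxB, hxs⟩)
              · exact ⟨Or.inl rfl, mem_gs.2 ⟨hy1, hys⟩⟩
              · have hx2 := (mem_gs.1 hxs).2
                exact ⟨Or.inr ⟨by omega, hxB⟩, hxs⟩
          rw [he, Finset.card_insert_of_notMem (fun hx => hyB (Finset.mem_inter.1 hx).1)]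
          have := hmid s hys hsd
          omega
        · have hdin : d ∈ B ∩ gs s := Finset.mem_inter.2 ⟨hdB, mem_gs.2 ⟨by omega, hds⟩⟩
          have he : (insert y (B.erase d)) ∩ gs s = insert y ((B ∩ gs s).erase d) := by
            ext x
            simp only [Finset.mem_inter, Finset.mem_insert, Finset.mem_erase]
            constructor
            · rintro ⟨rfl | ⟨hxd, hxB⟩, hxs⟩
              · exact Or.inl rfl
              · exact Or.inr ⟨hxd, hxB, hxs⟩
            · rintro (rfl | ⟨hxd, hxB, hxs⟩)
              · exact ⟨Or.inl rfl, mem_gs.2 ⟨hy1, by omega⟩⟩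
              · exact ⟨Or.inr ⟨hxd, hxB⟩, hxs⟩
          have hyn : y ∉ (B ∩ gs s).erase d :=
            fun hx => hyB (Finset.mem_inter.1 (Finset.mem_of_mem_erase hx)).1
          rw [he, Finset.card_insert_of_notMem hyn, Finset.card_erase_of_mem hdin]
          have h5 := H s
          have h6 : 1 ≤ (B ∩ gs s).card := Finset.card_pos.2 ⟨d, hdin⟩
          omega
    exact IH (insert y (B.erase d)) hB'G hcard' H'

end Chunk5

section Chunk6

lemma exists_good_s (n t : ℕ) (hn : 0 < n) (ht : 0 < t) (G : Finset (Finset ℕ))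
    (hGn : ∀ B ∈ G, B ⊆ gs n)
    (hGs : ∀ i j, 1 ≤ i → j ≤ n → i < j → ∀ B ∈ G, j ∈ B → i ∉ B →
      insert i (B.erase j) ∈ G)
    (A : Finset ℕ) (hAn : A ⊆ gs n)
    (hcrossA : ∀ B' ∈ G, t ≤ (A ∩ B').card)
    (B : Finset ℕ) (hBG : B ∈ G) :
    ∃ s, 1 ≤ s ∧ s ≤ n ∧ s + t ≤ (A ∩ gs s).card + (B ∩ gs s).card := by
  by_contra hcon
  push_neg at hcon
  have H : ∀ s, (A ∩ gs s).card + (B ∩ gs s).card < s + t := by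
    intro s
    rcases Nat.eq_zero_or_pos s with rfl | hs
    · have hgs0 : gs 0 = ∅ := by simp [gs]
      simp [hgs0, ht]
    · rcases le_or_gt s n with hsn | hns
      · exact hcon s hs hsn
      · have hgsub : gs n ⊆ gs s := by
          rw [gs, gs]
          exact Finset.Icc_subset_Icc_right (by omega)
        have hA : A ∩ gs s = A := Finset.inter_eq_left.2 (hAn.trans hgsub)
        have hB : B ∩ gs s = B := Finset.inter_eq_left.2 ((hGn B hBG).trans hgsub)
        have h1 := hcon n hn le_rfl
        have hA2 : A ∩ gs n = A := Finset.inter_eq_left.2 hAn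
        have hB2 : B ∩ gs n = B := Finset.inter_eq_left.2 (hGn B hBG)
        rw [hA2, hB2] at h1
        rw [hA, hB]
        omega
  obtain ⟨B', hB'G, hB'⟩ := exchange n t ht G hGn hGs A ((A ∩ B).card) B hBG le_rfl H
  exact absurd (hcrossA B' hB'G) (by omega)

end Chunk6

/-- The family `{A ∈ C([n],m) : |A ∩ [s]| ≥ u}` appearing in a Hirschorn pair. -/
def HirschF (n m s u : ℕ) : Finset (Finset ℕ) :=
  ((gs n).powersetCard m).filter (fun A => u ≤ (A ∩ gs s).card)

/-- The maximum of `|F| ⬝ |G|` over all Hirschorn pairs `(F, G)` with parameters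
`u, v, s ∈ [n]`, `u + v = s + t`. -/
noncomputable def NHatProd (n a b t : ℕ) : ℕ :=
  sSup {x : ℕ | ∃ u ∈ gs n, ∃ v ∈ gs n, ∃ s ∈ gs n, u + v = s + t ∧
    x = (HirschF n a s u).card * (HirschF n b s v).card}

/-- reformulation of Theorem 1. -/
theorem compressed_pair_in_union_of_hirschorn_products (n a b t : ℕ)
    (hn : 0 < n) (ha : 0 < a) (hb : 0 < b) (ht : 0 < t)
    (F G : Finset (Finset ℕ))
    (hF : UniformOn n a F) (hG : UniformOn n b G) (hFG : CrossInt t F G) :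
    ∃ Fs Gs : Finset (Finset ℕ),
      UniformOn n a Fs ∧ Fs.card = F.card ∧
      UniformOn n b Gs ∧ Gs.card = G.card ∧
      Fs ×ˢ Gs ⊆
        ((gs n ×ˢ gs n ×ˢ gs n).filter (fun p => p.1 + p.2.1 = p.2.2 + t)).biUnion
          (fun p => HirschF n a p.2.2 p.1 ×ˢ HirschF n b p.2.2 p.2.1) := by
  rcases Finset.eq_empty_or_nonempty F with rfl | hFne
  · exact ⟨∅, G, hF, rfl, hG, rfl, by simp⟩
  rcases Finset.eq_empty_or_nonempty G with rfl | hGne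
  · exact ⟨F, ∅, hF, rfl, hG, rfl, by simp⟩
  obtain ⟨F', G', hF', hFc, hG', hGc, hcross', hcomp⟩ :=
    exists_compressed_pair n a b t (famW F + famW G) F G le_rfl hF hG hFG
  refine ⟨F', G', hF', hFc, hG', hGc, ?_⟩
  intro p hp
  rw [Finset.mem_product] at hp
  obtain ⟨hAF, hBG⟩ := hp
  obtain ⟨hAn, hAcard⟩ := hF' _ hAF
  obtain ⟨hBn, hBcard⟩ := hG' _ hBG
  have hGs : ∀ i j, 1 ≤ i → j ≤ n → i < j → ∀ B ∈ G', j ∈ B → i ∉ B →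
      insert i (B.erase j) ∈ G' := by
    intro i j hi hj hij B hB hjB hiB
    have hcj := (hcomp i j (mem_gs.2 ⟨hi, by omega⟩) (mem_gs.2 ⟨by omega, hj⟩) hij).2
    have hmem := UV.compress_mem_compression (u := ({i} : Finset ℕ)) (v := ({j} : Finset ℕ)) hB
    rw [show UV.compression {i} {j} G' = G' from hcj,
      compress_eq_of i j (by omega) B hjB hiB] at hmem
    exact hmem
  have hcrossA : ∀ B' ∈ G', t ≤ (p.1 ∩ B').card := fun B' hB' => hcross' _ hAF _ hB'
  obtain ⟨s, hs1, hsn, hsum⟩ := exists_good_s n t hn ht G' (fun B hB => (hG' B hB).1) hGs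
    p.1 hAn hcrossA p.2 hBG
  have hu_le_s : (p.1 ∩ gs s).card ≤ s := by
    have := Finset.card_le_card (Finset.inter_subset_right : p.1 ∩ gs s ⊆ gs s)
    rwa [card_gs] at this
  have hv0_le_s : (p.2 ∩ gs s).card ≤ s := by
    have := Finset.card_le_card (Finset.inter_subset_right : p.2 ∩ gs s ⊆ gs s)
    rwa [card_gs] at this
  have hu_le_a : (p.1 ∩ gs s).card ≤ a := by
    have := Finset.card_le_card (Finset.inter_subset_left : p.1 ∩ gs s ⊆ p.1)
    omega
  have hv0_le_b : (p.2 ∩ gs s).card ≤ b := by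
    have := Finset.card_le_card (Finset.inter_subset_left : p.2 ∩ gs s ⊆ p.2)
    omega
  have han : a ≤ n := by
    have := Finset.card_le_card hAn
    rw [card_gs] at this
    omega
  have hbn : b ≤ n := by
    have := Finset.card_le_card hBn
    rw [card_gs] at this
    omega
  refine Finset.mem_biUnion.2 ⟨((p.1 ∩ gs s).card, s + t - (p.1 ∩ gs s).card, s), ?_, ?_⟩
  · simp only [Finset.mem_filter, Finset.mem_product, mem_gs]
    omega
  · simp only [Finset.mem_product]
    constructor
    · exact Finset.mem_filter.2 ⟨Finset.mem_powersetCard.2 ⟨hAn, hAcard⟩, le_rfl⟩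
    · refine Finset.mem_filter.2 ⟨Finset.mem_powersetCard.2 ⟨hBn, hBcard⟩, ?_⟩
      omega
end

section
/- Let n, a, b, t be positive integers. Then N̂_prod(n,a,b,t) ≤ N_prod(n,a,b,t) ≤ n² · N̂_prod(n,a,b,t). -/
open Finset

/-- The maximum of `|F| ⬝ |G|` over cross-`t`-intersecting pairs where `F` is an
`a`-uniform family and `G` a `b`-uniform family of subsets of `[n]`. -/
noncomputable def NProd (n a b t : ℕ) : ℕ :=
  sSup {x : ℕ | ∃ F G : Finset (Finset ℕ),
    UniformOn n a F ∧ UniformOn n b G ∧ CrossInt t F G ∧ x = F.card * G.card}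

/-- elementary shift of a set -/
def shSet (i j : ℕ) (A : Finset ℕ) : Finset ℕ :=
  if j ∈ A ∧ i ∉ A then insert i (A.erase j) else A

/-- compression of a family -/
def comp (i j : ℕ) (F : Finset (Finset ℕ)) : Finset (Finset ℕ) :=
  F.filter (fun A => shSet i j A ∈ F) ∪
    (F.filter (fun A => shSet i j A ∉ F)).image (shSet i j)

def Shifted (F : Finset (Finset ℕ)) : Prop :=
  ∀ A ∈ F, ∀ j ∈ A, ∀ i, 1 ≤ i → i < j → i ∉ A → insert i (A.erase j) ∈ F

lemma shSet_card (i j : ℕ) (h : i ≠ j) (A : Finset ℕ) :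
    (shSet i j A).card = A.card := by
  unfold shSet
  split_ifs with hc
  · rw [card_insert_of_notMem (fun hi => hc.2 (mem_of_mem_erase hi)),
      card_erase_of_mem hc.1]
    have : 0 < A.card := card_pos.2 ⟨j, hc.1⟩
    omega
  · rfl

lemma shSet_subset (i j : ℕ) (n : ℕ) (hi : 1 ≤ i) (hij : i < j) (A : Finset ℕ)
    (hA : A ⊆ gs n) : shSet i j A ⊆ gs n := by
  unfold shSet
  split_ifs with hc
  · intro x hx
    rcases mem_insert.1 hx with rfl | hx
    · have hj := hA hc.1
      simp only [gs, mem_Icc] at hj ⊢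
      omega
    · exact hA (mem_of_mem_erase hx)
  · exact hA

lemma mem_comp {i j : ℕ} {F : Finset (Finset ℕ)} {A : Finset ℕ} :
    A ∈ comp i j F ↔ (A ∈ F ∧ shSet i j A ∈ F) ∨
      (∃ B ∈ F, shSet i j B ∉ F ∧ A = shSet i j B) := by
  unfold comp
  simp only [mem_union, mem_filter, mem_image]
  constructor
  · rintro (h | ⟨B, hB, rfl⟩)
    · exact Or.inl h
    · exact Or.inr ⟨B, hB.1, hB.2, rfl⟩
  · rintro (h | ⟨B, hB, hB2, rfl⟩)
    · exact Or.inl h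
    · exact Or.inr ⟨B, ⟨hB, hB2⟩, rfl⟩

-- continuing: injectivity & card of comp
lemma shSet_ne_iff {i j : ℕ} {A : Finset ℕ} (h : shSet i j A ≠ A) :
    j ∈ A ∧ i ∉ A := by
  by_contra hc
  exact h (if_neg hc)

lemma shSet_inv {i j : ℕ} (hij : i ≠ j) {A : Finset ℕ} (hj : j ∈ A) (hi : i ∉ A) :
    insert j ((shSet i j A).erase i) = A := by
  rw [shSet, if_pos ⟨hj, hi⟩]
  ext x
  simp only [mem_insert, mem_erase, mem_insert, mem_erase]
  constructor
  · rintro (rfl | ⟨hx, (rfl | h)⟩)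
    · exact hj
    · exact absurd rfl hx
    · exact h.2
  · intro hx
    by_cases hxj : x = j
    · exact Or.inl hxj
    by_cases hxi : x = i
    · exact absurd (hxi ▸ hx) hi
    · exact Or.inr ⟨hxi, Or.inr ⟨hxj, hx⟩⟩

lemma comp_card (i j : ℕ) (hij : i ≠ j) (F : Finset (Finset ℕ)) :
    (comp i j F).card = F.card := by
  unfold comp
  rw [card_union_of_disjoint, card_image_of_injOn]
  · rw [← card_union_of_disjoint, filter_union_filter_not_eq]
    exact disjoint_filter_filter_not F F _
  · intro A hA B hB hAB
    simp only [coe_filter, Set.mem_setOf_eq] at hA hB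
    have hA' : shSet i j A ≠ A := fun h => hA.2 (by rw [h]; exact hA.1)
    have hB' : shSet i j B ≠ B := fun h => hB.2 (by rw [h]; exact hB.1)
    obtain ⟨hjA, hiA⟩ := shSet_ne_iff hA'
    obtain ⟨hjB, hiB⟩ := shSet_ne_iff hB'
    rw [← shSet_inv hij hjA hiA, ← shSet_inv hij hjB hiB, hAB]
  · simp only [disjoint_left, mem_filter, mem_image]
    rintro A ⟨hA, hsA⟩ ⟨B, ⟨hB, hsB⟩, rfl⟩
    exact hsB hA

lemma comp_uniform {n m i j : ℕ} (hi : 1 ≤ i) (hij : i < j) {F : Finset (Finset ℕ)}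
    (hF : UniformOn n m F) : UniformOn n m (comp i j F) := by
  intro A hA
  rcases mem_comp.1 hA with ⟨hA, _⟩ | ⟨B, hB, _, rfl⟩
  · exact hF A hA
  · obtain ⟨h1, h2⟩ := hF B hB
    exact ⟨shSet_subset i j n hi hij B h1, by rw [shSet_card i j hij.ne B, h2]⟩

-- intersection lemmas for shift
lemma sh_L1 {i j : ℕ} {B C : Finset ℕ} (hjC : j ∉ C) :
    C ∩ B ⊆ C ∩ shSet i j B := by
  unfold shSet
  split_ifs with hc
  · intro x hx
    rw [mem_inter] at hx ⊢
    refine ⟨hx.1, mem_insert_of_mem (mem_erase.2 ⟨?_, hx.2⟩)⟩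
    rintro rfl; exact hjC hx.1
  · exact subset_rfl

lemma sh_L2 {i j : ℕ} (hij : i ≠ j) {B C : Finset ℕ} (hjB : j ∈ B) (hiB : i ∉ B)
    (hjC : j ∈ C) (hiC : i ∈ C) :
    (C ∩ shSet i j B).card = (C ∩ B).card := by
  have he : C ∩ shSet i j B = insert i ((C ∩ B).erase j) := by
    rw [shSet, if_pos ⟨hjB, hiB⟩]
    ext x
    simp only [mem_inter, mem_insert, mem_erase]
    constructor
    · rintro ⟨hxC, (rfl | ⟨hxj, hxB⟩)⟩
      · exact Or.inl rfl
      · exact Or.inr ⟨hxj, hxC, hxB⟩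
    · rintro (rfl | ⟨hxj, hxC, hxB⟩)
      · exact ⟨hiC, Or.inl rfl⟩
      · exact ⟨hxC, Or.inr ⟨hxj, hxB⟩⟩
  rw [he, card_insert_of_notMem (fun h => hiB (mem_inter.1 (mem_of_mem_erase h)).2),
    card_erase_of_mem (mem_inter.2 ⟨hjC, hjB⟩)]
  have : 0 < (C ∩ B).card := card_pos.2 ⟨j, mem_inter.2 ⟨hjC, hjB⟩⟩
  omega

lemma sh_L3 {i j : ℕ} {B C : Finset ℕ} (hjB : j ∈ B) (hiB : i ∉ B)
    (hjC : j ∈ C) (hiC : i ∉ C) :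
    C ∩ shSet i j B = shSet i j C ∩ B := by
  rw [shSet, if_pos ⟨hjB, hiB⟩, shSet, if_pos ⟨hjC, hiC⟩]
  ext x
  simp only [mem_inter, mem_insert, mem_erase]
  constructor
  · rintro ⟨hxC, (rfl | ⟨hxj, hxB⟩)⟩
    · exact absurd hxC hiC
    · exact ⟨Or.inr ⟨hxj, hxC⟩, hxB⟩
  · rintro ⟨(rfl | ⟨hxj, hxC⟩), hxB⟩
    · exact absurd hxB hiB
    · exact ⟨hxC, Or.inr ⟨hxj, hxB⟩⟩

lemma sh_L4 {i j : ℕ} (hij : i ≠ j) {A B : Finset ℕ} (hjA : j ∈ A) (hiA : i ∉ A)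
    (hjB : j ∈ B) (hiB : i ∉ B) :
    (shSet i j A ∩ shSet i j B).card = (A ∩ B).card := by
  have he : shSet i j A ∩ shSet i j B = insert i ((A ∩ B).erase j) := by
    rw [shSet, if_pos ⟨hjA, hiA⟩, shSet, if_pos ⟨hjB, hiB⟩]
    ext x
    simp only [mem_inter, mem_insert, mem_erase]
    constructor
    · rintro ⟨(rfl | ⟨hxj, hxA⟩), hB⟩
      · exact Or.inl rfl
      · rcases hB with rfl | ⟨_, hxB⟩
        · exact absurd hxA hiA
        · exact Or.inr ⟨hxj, hxA, hxB⟩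
    · rintro (rfl | ⟨hxj, hxA, hxB⟩)
      · exact ⟨Or.inl rfl, Or.inl rfl⟩
      · exact ⟨Or.inr ⟨hxj, hxA⟩, Or.inr ⟨hxj, hxB⟩⟩
  rw [he, card_insert_of_notMem (fun h => hiA (mem_inter.1 (mem_of_mem_erase h)).1),
    card_erase_of_mem (mem_inter.2 ⟨hjA, hjB⟩)]
  have : 0 < (A ∩ B).card := card_pos.2 ⟨j, mem_inter.2 ⟨hjA, hjB⟩⟩
  omega

lemma comp_cross {t i j : ℕ} (hij : i ≠ j) {F G : Finset (Finset ℕ)}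
    (h : CrossInt t F G) : CrossInt t (comp i j F) (comp i j G) := by
  -- helper for the mixed case: A fixed in F (with shSet A ∈ F), B moved
  have mixed : ∀ F G : Finset (Finset ℕ), CrossInt t F G →
      ∀ A ∈ F, shSet i j A ∈ F → ∀ B ∈ G, shSet i j B ∉ G →
        t ≤ (A ∩ shSet i j B).card := by
    intro F G h A hA hsA B hB hsB
    have hne : shSet i j B ≠ B := fun he => hsB (by rw [he]; exact hB)
    obtain ⟨hjB, hiB⟩ := shSet_ne_iff hne
    by_cases hjA : j ∈ A
    · by_cases hiA : i ∈ A
      · rw [sh_L2 hij hjB hiB hjA hiA]; exact h A hA B hB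
      · rw [sh_L3 hjB hiB hjA hiA]; exact h _ hsA B hB
    · exact le_trans (h A hA B hB) (card_le_card (sh_L1 hjA))
  intro A' hA' B' hB'
  rcases mem_comp.1 hA' with ⟨hA, hsA⟩ | ⟨A, hA, hsA, rfl⟩ <;>
    rcases mem_comp.1 hB' with ⟨hB, hsB⟩ | ⟨B, hB, hsB, rfl⟩
  · exact h A' hA B' hB
  · exact mixed F G h A' hA hsA B hB hsB
  · have : t ≤ (B' ∩ shSet i j A).card := by
      refine mixed G F ?_ B' hB hsB A hA hsA
      intro X hX Y hY; rw [inter_comm]; exact h Y hY X hX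
    rwa [inter_comm]
  · have hneA : shSet i j A ≠ A := fun he => hsA (by rw [he]; exact hA)
    have hneB : shSet i j B ≠ B := fun he => hsB (by rw [he]; exact hB)
    obtain ⟨hjA, hiA⟩ := shSet_ne_iff hneA
    obtain ⟨hjB, hiB⟩ := shSet_ne_iff hneB
    rw [sh_L4 hij hjA hiA hjB hiB]
    exact h A hA B hB

def msr (F : Finset (Finset ℕ)) : ℕ := ∑ A ∈ F, ∑ x ∈ A, x

lemma comp_disj (i j : ℕ) (F : Finset (Finset ℕ)) :
    Disjoint (F.filter (fun A => shSet i j A ∈ F))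
      ((F.filter (fun A => shSet i j A ∉ F)).image (shSet i j)) := by
  simp only [disjoint_left, mem_filter, mem_image]
  rintro A ⟨hA, hsA⟩ ⟨B, ⟨hB, hsB⟩, rfl⟩
  exact hsB hA

lemma comp_injOn (i j : ℕ) (hij : i ≠ j) (F : Finset (Finset ℕ)) :
    Set.InjOn (shSet i j) (F.filter (fun A => shSet i j A ∉ F)) := by
  intro A hA B hB hAB
  simp only [coe_filter, Set.mem_setOf_eq] at hA hB
  have hA' : shSet i j A ≠ A := fun h => hA.2 (by rw [h]; exact hA.1)
  have hB' : shSet i j B ≠ B := fun h => hB.2 (by rw [h]; exact hB.1)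
  obtain ⟨hjA, hiA⟩ := shSet_ne_iff hA'
  obtain ⟨hjB, hiB⟩ := shSet_ne_iff hB'
  rw [← shSet_inv hij hjA hiA, ← shSet_inv hij hjB hiB, hAB]

lemma shSet_sum_lt {i j : ℕ} (hij : i < j) {A : Finset ℕ} (hjA : j ∈ A) (hiA : i ∉ A) :
    ∑ x ∈ shSet i j A, x < ∑ x ∈ A, x := by
  rw [shSet, if_pos ⟨hjA, hiA⟩,
    sum_insert (fun h => hiA (mem_of_mem_erase h))]
  have h := Finset.add_sum_erase A (fun x => x) hjA
  omega

lemma msr_comp {i j : ℕ} (hij : i < j) (F : Finset (Finset ℕ)) :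
    msr (comp i j F) ≤ msr F ∧
    ((∃ A ∈ F, shSet i j A ∉ F) → msr (comp i j F) < msr F) := by
  classical
  have hrw : msr (comp i j F)
      = ∑ A ∈ F.filter (fun A => shSet i j A ∈ F), (∑ x ∈ A, x)
        + ∑ A ∈ F.filter (fun A => shSet i j A ∉ F), (∑ x ∈ shSet i j A, x) := by
    rw [msr, comp, sum_union (comp_disj i j F), sum_image (comp_injOn i j hij.ne F)]
  have hrw2 : msr F
      = ∑ A ∈ F.filter (fun A => shSet i j A ∈ F), (∑ x ∈ A, x)
        + ∑ A ∈ F.filter (fun A => shSet i j A ∉ F), (∑ x ∈ A, x) := by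
    rw [msr, ← sum_union (disjoint_filter_filter_not F F _),
      filter_union_filter_not_eq]
  have key : ∀ A ∈ F.filter (fun A => shSet i j A ∉ F),
      ∑ x ∈ shSet i j A, x < ∑ x ∈ A, x := by
    intro A hA
    rw [mem_filter] at hA
    have hne : shSet i j A ≠ A := fun h => hA.2 (by rw [h]; exact hA.1)
    obtain ⟨hjA, hiA⟩ := shSet_ne_iff hne
    exact shSet_sum_lt hij hjA hiA
  constructor
  · rw [hrw, hrw2]
    exact Nat.add_le_add le_rfl (sum_le_sum (fun A hA => (key A hA).le))
  · rintro ⟨A, hA, hsA⟩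
    rw [hrw, hrw2]
    refine Nat.add_lt_add_left ?_ _
    refine sum_lt_sum (fun B hB => (key B hB).le) ⟨A, mem_filter.2 ⟨hA, hsA⟩, key A (mem_filter.2 ⟨hA, hsA⟩)⟩

theorem exists_shifted_pair (n a b t : ℕ) :
    ∀ N F G, msr F + msr G ≤ N → UniformOn n a F → UniformOn n b G → CrossInt t F G →
    ∃ F' G', UniformOn n a F' ∧ UniformOn n b G' ∧ CrossInt t F' G' ∧
      Shifted F' ∧ Shifted G' ∧ F'.card = F.card ∧ G'.card = G.card := by
  intro N
  induction N using Nat.strong_induction_on with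
  | _ N IH =>
    intro F G hN hF hG hFG
    by_cases hSF : Shifted F
    · by_cases hSG : Shifted G
      · exact ⟨F, G, hF, hG, hFG, hSF, hSG, rfl, rfl⟩
      · -- G not shifted
        simp only [Shifted, not_forall] at hSG
        obtain ⟨B, hB, j, hjB, i, hi1, hij, hiB, hmv⟩ := hSG
        have hact : shSet i j B ∉ G := by rwa [shSet, if_pos ⟨hjB, hiB⟩]
        have h1 := msr_comp hij F
        have h2 := msr_comp hij G
        have hlt : msr (comp i j F) + msr (comp i j G) < N := by
          have := h2.2 ⟨B, hB, hact⟩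
          omega
        obtain ⟨F', G', u1, u2, u3, u4, u5, u6, u7⟩ :=
          IH _ hlt (comp i j F) (comp i j G) le_rfl
            (comp_uniform hi1 hij hF) (comp_uniform hi1 hij hG)
            (comp_cross hij.ne hFG)
        exact ⟨F', G', u1, u2, u3, u4, u5,
          by rw [u6, comp_card i j hij.ne], by rw [u7, comp_card i j hij.ne]⟩
    · simp only [Shifted, not_forall] at hSF
      obtain ⟨A, hA, j, hjA, i, hi1, hij, hiA, hmv⟩ := hSF
      have hact : shSet i j A ∉ F := by rwa [shSet, if_pos ⟨hjA, hiA⟩]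
      have h1 := msr_comp hij F
      have h2 := msr_comp hij G
      have hlt : msr (comp i j F) + msr (comp i j G) < N := by
        have := h1.2 ⟨A, hA, hact⟩
        omega
      obtain ⟨F', G', u1, u2, u3, u4, u5, u6, u7⟩ :=
        IH _ hlt (comp i j F) (comp i j G) le_rfl
          (comp_uniform hi1 hij hF) (comp_uniform hi1 hij hG)
          (comp_cross hij.ne hFG)
      exact ⟨F', G', u1, u2, u3, u4, u5,
        by rw [u6, comp_card i j hij.ne], by rw [u7, comp_card i j hij.ne]⟩

lemma gs_mem {x n : ℕ} : x ∈ gs n ↔ 1 ≤ x ∧ x ≤ n := mem_Icc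

lemma gs_card (m : ℕ) : (gs m).card = m := by
  simp [gs]

lemma gs_insert {x : ℕ} (hx : 1 ≤ x) : gs x = insert x (gs (x - 1)) := by
  ext y
  simp only [gs, mem_Icc, mem_insert]
  omega

lemma not_mem_gs_pred {x : ℕ} : x ∉ gs (x - 1) := by
  simp only [gs, mem_Icc]; omega

lemma inter_gs_succ_mem {A : Finset ℕ} {x : ℕ} (hx : 1 ≤ x) (hA : x ∈ A) :
    (A ∩ gs x).card = (A ∩ gs (x - 1)).card + 1 := by
  rw [gs_insert hx, inter_insert_of_mem hA,
    card_insert_of_notMem (fun h => not_mem_gs_pred (mem_inter.1 h).2)]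

lemma inter_gs_succ_le {A : Finset ℕ} {x : ℕ} :
    (A ∩ gs (x - 1)).card ≤ (A ∩ gs x).card := by
  refine card_le_card (inter_subset_inter_left ?_)
  simp only [gs]
  exact Icc_subset_Icc le_rfl (Nat.sub_le x 1)

lemma no_invariant {n t : ℕ} (ht : 1 ≤ t) {F G : Finset (Finset ℕ)}
    (hG : Shifted G) (hGn : ∀ B ∈ G, B ⊆ gs n) (hFG : CrossInt t F G)
    {A : Finset ℕ} (hA : A ∈ F) :
    ∀ m : ℕ, ∀ B ∈ G, (A ∩ B).card = m →
      (∀ s, 1 ≤ s → s ≤ n → (A ∩ gs s).card + (B ∩ gs s).card < s + t) → False := by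
  intro m
  induction m using Nat.strong_induction_on with
  | _ m IH =>
    intro B hB hm hinv
    have hBn : B ⊆ gs n := hGn B hB
    have htm : t ≤ m := hm ▸ hFG A hA B hB
    set X := A ∩ B with hX
    have hXne : X.Nonempty := card_pos.1 (by omega)
    have hXn : X ⊆ gs n := fun x hx => hBn (mem_inter.1 hx).2
    -- find j : t-th smallest element of X
    set T := X.filter (fun x => t ≤ (X ∩ gs x).card) with hT
    have hTne : T.Nonempty := by
      refine ⟨X.max' hXne, mem_filter.2 ⟨X.max'_mem hXne, ?_⟩⟩
      have : X ⊆ X ∩ gs (X.max' hXne) := by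
        intro x hx
        refine mem_inter.2 ⟨hx, gs_mem.2 ⟨(gs_mem.1 (hXn hx)).1, X.le_max' x hx⟩⟩
      calc t ≤ X.card := by omega
        _ ≤ _ := card_le_card this
    set j := T.min' hTne with hj
    have hjT : j ∈ T := T.min'_mem hTne
    have hjX : j ∈ X := (mem_filter.1 hjT).1
    have hjcard : t ≤ (X ∩ gs j).card := (mem_filter.1 hjT).2
    have hj1 : 1 ≤ j := (gs_mem.1 (hXn hjX)).1
    have hjn : j ≤ n := (gs_mem.1 (hXn hjX)).2
    have hjA : j ∈ A := (mem_inter.1 hjX).1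
    have hjB : j ∈ B := (mem_inter.1 hjX).2
    -- (X ∩ gs (j-1)).card = t - 1
    have hXj : (X ∩ gs j).card = (X ∩ gs (j - 1)).card + 1 := inter_gs_succ_mem hj1 hjX
    have hXup : (X ∩ gs (j - 1)).card < t := by
      by_contra hc
      push_neg at hc
      have hYne : (X ∩ gs (j - 1)).Nonempty := card_pos.1 (by omega)
      set x := (X ∩ gs (j - 1)).max' hYne with hxdef
      have hxmem := (X ∩ gs (j - 1)).max'_mem hYne
      have hxX : x ∈ X := (mem_inter.1 hxmem).1
      have hxlt : x < j := by
        have := (gs_mem.1 (mem_inter.1 hxmem).2).2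
        omega
      have hxT : x ∈ T := by
        refine mem_filter.2 ⟨hxX, le_trans hc (card_le_card ?_)⟩
        intro y hy
        refine mem_inter.2 ⟨(mem_inter.1 hy).1, gs_mem.2
          ⟨(gs_mem.1 (hXn (mem_inter.1 hy).1)).1, (X ∩ gs (j - 1)).le_max' y hy⟩⟩
      exact absurd (T.min'_le x hxT) (by omega)
    -- step 2 : invariant at s = j
    have hinvj := hinv j hj1 hjn
    have hAj : (A ∩ gs j).card = (A ∩ gs (j - 1)).card + 1 := inter_gs_succ_mem hj1 hjA
    have hBj : (B ∩ gs j).card = (B ∩ gs (j - 1)).card + 1 := inter_gs_succ_mem hj1 hjB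
    have hstep2 : (A ∩ gs (j - 1)).card + (B ∩ gs (j - 1)).card + 3 ≤ j + t := by omega
    -- step 3 : free slot below j
    have hcount : ((A ∪ B) ∩ gs (j - 1)).card + (X ∩ gs (j - 1)).card
        = (A ∩ gs (j - 1)).card + (B ∩ gs (j - 1)).card := by
      have h1 : (A ∪ B) ∩ gs (j - 1) = (A ∩ gs (j - 1)) ∪ (B ∩ gs (j - 1)) :=
        union_inter_distrib_right ..
      have h2 : X ∩ gs (j - 1) = (A ∩ gs (j - 1)) ∩ (B ∩ gs (j - 1)) := by
        rw [hX]; ext y; simp only [mem_inter]; tauto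
      rw [h1, h2, card_union_add_card_inter]
    set U := gs (j - 1) \ (A ∪ B) with hU
    have hUcard : U.card + ((A ∪ B) ∩ gs (j - 1)).card = j - 1 := by
      have := card_sdiff_add_card_inter (gs (j - 1)) (A ∪ B)
      rw [inter_comm] at this
      rw [hU, this, gs_card]
    have hUne : U.Nonempty := by
      refine card_pos.1 ?_
      omega
    set i := U.max' hUne with hi
    have hiU : i ∈ U := U.max'_mem hUne
    have hi1 : 1 ≤ i := (gs_mem.1 (mem_sdiff.1 hiU).1).1
    have hij : i < j := by
      have := (gs_mem.1 (mem_sdiff.1 hiU).1).2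
      omega
    have hiA : i ∉ A := fun h => (mem_sdiff.1 hiU).2 (mem_union_left _ h)
    have hiB : i ∉ B := fun h => (mem_sdiff.1 hiU).2 (mem_union_right _ h)
    -- step 4 : B' ∈ G
    set B' := insert i (B.erase j) with hB'
    have hB'G : B' ∈ G := hG B hB j hjB i hi1 hij hiB
    -- step 5 : card drop
    have hAB' : A ∩ B' = X.erase j := by
      rw [hB', hX]
      ext y
      simp only [mem_inter, mem_insert, mem_erase]
      constructor
      · rintro ⟨hyA, (rfl | hy)⟩
        · exact absurd hyA hiA
        · exact ⟨hy.1, hyA, hy.2⟩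
      · rintro ⟨hyj, hyA, hyB⟩
        exact ⟨hyA, Or.inr ⟨hyj, hyB⟩⟩
    have hmm : (A ∩ B').card = m - 1 := by
      rw [hAB', card_erase_of_mem hjX, hm]
    -- step 6 : invariant for B'
    -- chain: positions in (s, j-1] are all occupied
    have hchain : ∀ s, i ≤ s → ∀ d, s + d ≤ j - 1 →
        (A ∩ gs s).card + (B ∩ gs s).card + d
          ≤ (A ∩ gs (s + d)).card + (B ∩ gs (s + d)).card := by
      intro s hs d
      induction d with
      | zero => intro _; simp
      | succ d IHd =>
        intro hd
        have hd' : s + d ≤ j - 1 := by omega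
        have hx1 : 1 ≤ s + d + 1 := by omega
        have hmem : s + d + 1 ∈ A ∪ B := by
          by_contra hc
          have : s + d + 1 ∈ U := mem_sdiff.2 ⟨gs_mem.2 ⟨by omega, by omega⟩, hc⟩
          have := U.le_max' _ this
          omega
        have heq : s + d + 1 - 1 = s + d := by omega
        rcases mem_union.1 hmem with h | h
        · have h1 : (A ∩ gs (s + d + 1)).card = (A ∩ gs (s + d)).card + 1 := by
            have := inter_gs_succ_mem hx1 h
            rwa [heq] at this
          have h2 : (B ∩ gs (s + d)).card ≤ (B ∩ gs (s + d + 1)).card := by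
            have := inter_gs_succ_le (A := B) (x := s + d + 1)
            rwa [heq] at this
          have := IHd hd'
          simp only [← Nat.add_assoc] at *
          omega
        · have h1 : (B ∩ gs (s + d + 1)).card = (B ∩ gs (s + d)).card + 1 := by
            have := inter_gs_succ_mem hx1 h
            rwa [heq] at this
          have h2 : (A ∩ gs (s + d)).card ≤ (A ∩ gs (s + d + 1)).card := by
            have := inter_gs_succ_le (A := A) (x := s + d + 1)
            rwa [heq] at this
          have := IHd hd'
          simp only [← Nat.add_assoc] at *
          omega
    have hinv' : ∀ s, 1 ≤ s → s ≤ n →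
        (A ∩ gs s).card + (B' ∩ gs s).card < s + t := by
      intro s hs1 hsn
      by_cases hcase1 : s < i
      · have : B' ∩ gs s = B ∩ gs s := by
          ext y
          simp only [hB', mem_inter, mem_insert, mem_erase]
          constructor
          · rintro ⟨(rfl | hy), hygs⟩
            · exact absurd (gs_mem.1 hygs).2 (by omega)
            · exact ⟨hy.2, hygs⟩
          · rintro ⟨hyB, hygs⟩
            have : y ≠ j := by
              have := (gs_mem.1 hygs).2; omega
            exact ⟨Or.inr ⟨this, hyB⟩, hygs⟩
        rw [this]
        exact hinv s hs1 hsn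
      by_cases hcase2 : s < j
      · -- i ≤ s < j
        push_neg at hcase1
        have hBs : B' ∩ gs s = insert i (B ∩ gs s) := by
          ext y
          simp only [hB', mem_inter, mem_insert, mem_erase]
          constructor
          · rintro ⟨(rfl | hy), hygs⟩
            · exact Or.inl rfl
            · exact Or.inr ⟨hy.2, hygs⟩
          · rintro (rfl | ⟨hyB, hygs⟩)
            · exact ⟨Or.inl rfl, gs_mem.2 ⟨hi1, hcase1⟩⟩
            · have : y ≠ j := by
                have := (gs_mem.1 hygs).2; omega
              exact ⟨Or.inr ⟨this, hyB⟩, hygs⟩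
        have hcard : (B' ∩ gs s).card = (B ∩ gs s).card + 1 := by
          rw [hBs, card_insert_of_notMem (fun h => hiB (mem_inter.1 h).1)]
        have hchain' := hchain s hcase1 (j - 1 - s) (by omega)
        have hseq : s + (j - 1 - s) = j - 1 := by omega
        rw [hseq] at hchain'
        omega
      · -- s ≥ j
        push_neg at hcase1 hcase2
        have hBs : B' ∩ gs s = insert i ((B ∩ gs s).erase j) := by
          ext y
          simp only [hB', mem_inter, mem_insert, mem_erase]
          constructor
          · rintro ⟨(rfl | hy), hygs⟩
            · exact Or.inl rfl
            · exact Or.inr ⟨hy.1, hy.2, hygs⟩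
          · rintro (rfl | ⟨hyj, hyB, hygs⟩)
            · exact ⟨Or.inl rfl, gs_mem.2 ⟨hi1, by omega⟩⟩
            · exact ⟨Or.inr ⟨hyj, hyB⟩, hygs⟩
        have hjBs : j ∈ B ∩ gs s := mem_inter.2 ⟨hjB, gs_mem.2 ⟨hj1, hcase2⟩⟩
        have hcard : (B' ∩ gs s).card = (B ∩ gs s).card := by
          rw [hBs, card_insert_of_notMem
            (fun h => hiB (mem_inter.1 (mem_of_mem_erase h)).1),
            card_erase_of_mem hjBs]
          have : 0 < (B ∩ gs s).card := card_pos.2 ⟨j, hjBs⟩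
          omega
        rw [hcard]
        exact hinv s hs1 hsn
    exact IH (m - 1) (by omega) B' hB'G hmm hinv'

lemma exists_s {n t : ℕ} (ht : 1 ≤ t) {F G : Finset (Finset ℕ)}
    (hG : Shifted G) (hGn : ∀ B ∈ G, B ⊆ gs n) (hFG : CrossInt t F G)
    {A B : Finset ℕ} (hA : A ∈ F) (hB : B ∈ G) :
    ∃ s, 1 ≤ s ∧ s ≤ n ∧ s + t ≤ (A ∩ gs s).card + (B ∩ gs s).card := by
  by_contra hc
  push_neg at hc
  exact no_invariant ht hG hGn hFG hA _ B hB rfl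
    (fun s h1 h2 => hc s h1 h2)

lemma hirsch_uniform (n m s u : ℕ) : UniformOn n m (HirschF n m s u) := by
  intro A hA
  exact mem_powersetCard.1 (mem_filter.1 hA).1

lemma card_family_le {n m : ℕ} {F : Finset (Finset ℕ)} (hF : UniformOn n m F) :
    F.card ≤ 2 ^ n := by
  calc F.card ≤ ((gs n).powerset).card :=
        card_le_card (fun A hA => mem_powerset.2 (hF A hA).1)
    _ = 2 ^ n := by rw [card_powerset, gs_card]

lemma NHat_bdd (n a b t : ℕ) : BddAbove {x : ℕ | ∃ u ∈ gs n, ∃ v ∈ gs n, ∃ s ∈ gs n,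
    u + v = s + t ∧ x = (HirschF n a s u).card * (HirschF n b s v).card} := by
  refine ⟨2 ^ n * 2 ^ n, ?_⟩
  rintro x ⟨u, _, v, _, s, _, _, rfl⟩
  exact Nat.mul_le_mul (card_family_le (hirsch_uniform n a s u))
    (card_family_le (hirsch_uniform n b s v))

lemma NProd_bdd (n a b t : ℕ) : BddAbove {x : ℕ | ∃ F G : Finset (Finset ℕ),
    UniformOn n a F ∧ UniformOn n b G ∧ CrossInt t F G ∧ x = F.card * G.card} := by
  refine ⟨2 ^ n * 2 ^ n, ?_⟩
  rintro x ⟨F, G, hF, hG, _, rfl⟩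
  exact Nat.mul_le_mul (card_family_le hF) (card_family_le hG)

/-- Hirschorn pairs are cross-t-intersecting. -/
lemma hirsch_cross {n a b t u v s : ℕ} (huv : u + v = s + t) :
    CrossInt t (HirschF n a s u) (HirschF n b s v) := by
  intro A hA B hB
  have hu : u ≤ (A ∩ gs s).card := (mem_filter.1 hA).2
  have hv : v ≤ (B ∩ gs s).card := (mem_filter.1 hB).2
  have hkey : ((A ∩ gs s) ∪ (B ∩ gs s)).card + ((A ∩ gs s) ∩ (B ∩ gs s)).card
      = (A ∩ gs s).card + (B ∩ gs s).card := card_union_add_card_inter ..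
  have h1 : ((A ∩ gs s) ∪ (B ∩ gs s)).card ≤ s := by
    calc ((A ∩ gs s) ∪ (B ∩ gs s)).card ≤ (gs s).card :=
          card_le_card (union_subset inter_subset_right inter_subset_right)
      _ = s := gs_card s
  have h2 : ((A ∩ gs s) ∩ (B ∩ gs s)).card ≤ (A ∩ B).card := by
    refine card_le_card (fun y hy => ?_)
    simp only [mem_inter] at hy ⊢
    exact ⟨hy.1.1, hy.2.1⟩
  omega

/-- Main counting bound for a pair with `G` shifted. -/
lemma counting {n a b t : ℕ} (ht : 1 ≤ t) {F G : Finset (Finset ℕ)}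
    (hF : UniformOn n a F) (hG : UniformOn n b G) (hFG : CrossInt t F G)
    (hSG : Shifted G) :
    F.card * G.card ≤ n ^ 2 * NHatProd n a b t := by
  classical
  set I : Finset (ℕ × ℕ) := (gs n ×ˢ gs n).filter
    (fun p => p.2 ≤ p.1 + t ∧ 1 ≤ p.1 + t - p.2 ∧ p.1 + t - p.2 ≤ n) with hI
  have hcover : F ×ˢ G ⊆ I.biUnion
      (fun p => HirschF n a p.1 p.2 ×ˢ HirschF n b p.1 (p.1 + t - p.2)) := by
    rintro ⟨A, B⟩ hAB
    rw [mem_product] at hAB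
    obtain ⟨hA, hB⟩ := hAB
    obtain ⟨s, hs1, hsn, hst⟩ := exists_s ht hSG (fun B hB => (hG B hB).1) hFG hA hB
    set cA := (A ∩ gs s).card
    set cB := (B ∩ gs s).card
    have hcAs : cA ≤ s := by
      calc cA ≤ (gs s).card := card_le_card inter_subset_right
        _ = s := gs_card s
    have hcBs : cB ≤ s := by
      calc cB ≤ (gs s).card := card_le_card inter_subset_right
        _ = s := gs_card s
    set u := s + t - cB with hu
    have huv : s + t - u = cB := by omega
    rw [mem_biUnion]
    refine ⟨(s, u), ?_, ?_⟩
    · rw [hI, mem_filter, mem_product]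
      refine ⟨⟨gs_mem.2 ⟨hs1, hsn⟩, gs_mem.2 ⟨by omega, by omega⟩⟩, by omega, by omega, by omega⟩
    · rw [mem_product]
      constructor
      · refine mem_filter.2 ⟨mem_powersetCard.2 ⟨(hF A hA).1, (hF A hA).2⟩, ?_⟩
        show u ≤ cA
        omega
      · refine mem_filter.2 ⟨mem_powersetCard.2 ⟨(hG B hB).1, (hG B hB).2⟩, ?_⟩
        show s + t - u ≤ cB
        omega
  have hterm : ∀ p ∈ I, (HirschF n a p.1 p.2).card
      * (HirschF n b p.1 (p.1 + t - p.2)).card ≤ NHatProd n a b t := by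
    rintro ⟨s, u⟩ hp
    rw [hI, mem_filter, mem_product] at hp
    obtain ⟨⟨hsg, hug⟩, h1, h2, h3⟩ := hp
    refine le_csSup (NHat_bdd n a b t) ?_
    refine ⟨u, hug, s + t - u, gs_mem.2 ⟨h2, h3⟩, s, hsg, by omega, rfl⟩
  calc F.card * G.card = (F ×ˢ G).card := (card_product F G).symm
    _ ≤ (I.biUnion _).card := card_le_card hcover
    _ ≤ ∑ p ∈ I, (HirschF n a p.1 p.2 ×ˢ HirschF n b p.1 (p.1 + t - p.2)).card :=
        card_biUnion_le
    _ = ∑ p ∈ I, (HirschF n a p.1 p.2).card * (HirschF n b p.1 (p.1 + t - p.2)).card := by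
        simp [card_product]
    _ ≤ ∑ _p ∈ I, NHatProd n a b t := sum_le_sum hterm
    _ = I.card * NHatProd n a b t := by rw [sum_const, smul_eq_mul]
    _ ≤ n ^ 2 * NHatProd n a b t := by
        refine Nat.mul_le_mul_right _ ?_
        calc I.card ≤ (gs n ×ˢ gs n).card := card_le_card (filter_subset _ _)
          _ = n ^ 2 := by rw [card_product, gs_card, sq]


/-- Corollary for the product functional. -/
theorem sandwich_for_product (n a b t : ℕ) (hn : 0 < n) (ha : 0 < a) (hb : 0 < b)
    (ht : 0 < t) :
    NHatProd n a b t ≤ NProd n a b t ∧ NProd n a b t ≤ n ^ 2 * NHatProd n a b t := by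
  constructor
  · rcases Set.eq_empty_or_nonempty {x : ℕ | ∃ u ∈ gs n, ∃ v ∈ gs n, ∃ s ∈ gs n,
        u + v = s + t ∧ x = (HirschF n a s u).card * (HirschF n b s v).card} with he | hne
    · rw [NHatProd, he, csSup_empty]
      exact Nat.zero_le _
    · refine csSup_le hne ?_
      rintro x ⟨u, hu, v, hv, s, hs, huv, rfl⟩
      refine le_csSup (NProd_bdd n a b t) ?_
      exact ⟨HirschF n a s u, HirschF n b s v, hirsch_uniform n a s u,
        hirsch_uniform n b s v, hirsch_cross huv, rfl⟩
  · refine csSup_le ⟨0, ∅, ∅, fun A hA => absurd hA (notMem_empty A),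
      fun A hA => absurd hA (notMem_empty A),
      fun A hA => absurd hA (notMem_empty A), by simp⟩ ?_
    rintro x ⟨F, G, hF, hG, hFG, rfl⟩
    obtain ⟨F', G', u1, u2, u3, _, u5, u6, u7⟩ :=
      exists_shifted_pair n a b t (msr F + msr G) F G le_rfl hF hG hFG
    rw [← u6, ← u7]
    exact counting ht u1 u2 u3 u5
end
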